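/- (Cluster Expansion Lemma) Suppose events E_1,...,E_n and a graph G on [n] satisfy Pr[E_i | ∩_{j∈J} ¬E_j] ≤ p_i for all i and J ⊆ [n]∖Γ⁺(i), and there exist reals y_1,...,y_n > 0 such that p_i ≤ y_i / Y_{Γ⁺(i)} for each i, where Y_S = Σ_{I⊆S, I independent in G} ∏_{i∈I} y_i. Then Pr[∩_{i=1}^n ¬E_i] ≥ 1 / Y_{[n]} > 0. -/

import Mathlib

open Finset MeasureTheory

/-- `I` is an independent set of `G`. -/
def Indep {n : ℕ} (G : SimpleGraph (Fin n)) (I : Finset (Fin n)) : Prop :=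
  ∀ i ∈ I, ∀ j ∈ I, ¬ G.Adj i j

instance {n : ℕ} (G : SimpleGraph (Fin n)) [DecidableRel G.Adj] (I : Finset (Fin n)) :
    Decidable (Indep G I) := by unfold Indep; infer_instance

/-- Closed neighborhood `Γ⁺(a)`. -/
def Gp {n : ℕ} (G : SimpleGraph (Fin n)) [DecidableRel G.Adj] (a : Fin n) : Finset (Fin n) :=
  insert a (G.neighborFinset a)

/-- Shearer coefficient `q̆_S`. -/
def qb {n : ℕ} (G : SimpleGraph (Fin n)) [DecidableRel G.Adj] (p : Fin n → ℝ)
    (S : Finset (Fin n)) : ℝ :=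
  ∑ I ∈ S.powerset.filter (fun I => Indep G I), (-1 : ℝ) ^ I.card * ∏ i ∈ I, p i

/-- Cluster-expansion polynomial `Y_S`. -/
def Yf {n : ℕ} (G : SimpleGraph (Fin n)) [DecidableRel G.Adj] (y : Fin n → ℝ)
    (S : Finset (Fin n)) : ℝ :=
  ∑ I ∈ S.powerset.filter (fun I => Indep G I), ∏ i ∈ I, y i

variable {n : ℕ} (G : SimpleGraph (Fin n)) [DecidableRel G.Adj]

lemma indep_subset {I J : Finset (Fin n)} (h : I ⊆ J) (hJ : Indep G J) : Indep G I :=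
  fun i hi j hj => hJ i (h hi) j (h hj)

lemma filter_indep_insert {i : Fin n} {S : Finset (Fin n)} (hi : i ∉ S) :
    ((insert i S).powerset.filter (fun I => Indep G I)) =
      (S.powerset.filter (fun I => Indep G I)) ∪
        (((S \ Gp G i).powerset.filter (fun I => Indep G I)).image (insert i)) := by
  ext I
  simp only [mem_filter, mem_powerset, mem_union, mem_image]
  constructor
  · rintro ⟨hsub, hind⟩
    by_cases hiI : i ∈ I
    · right
      refine ⟨I.erase i, ⟨⟨?_, indep_subset G (erase_subset _ _) hind⟩, insert_erase hiI⟩⟩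
      intro j hj
      rw [mem_erase] at hj
      have hjS : j ∈ S := by
        have := hsub hj.2; rw [mem_insert] at this; tauto
      rw [mem_sdiff]
      refine ⟨hjS, ?_⟩
      intro hjGp
      rw [Gp, mem_insert, SimpleGraph.mem_neighborFinset] at hjGp
      rcases hjGp with h | h
      · exact hj.1 h
      · exact hind i hiI j hj.2 h
    · left
      refine ⟨fun j hj => ?_, hind⟩
      have := hsub hj; rw [mem_insert] at this
      rcases this with h | h
      · exact absurd (h ▸ hj) hiI
      · exact h
  · rintro (⟨hsub, hind⟩ | ⟨J, ⟨⟨hsub, hind⟩, rfl⟩⟩)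
    · exact ⟨hsub.trans (subset_insert _ _), hind⟩
    · constructor
      · exact insert_subset_insert _ (hsub.trans (sdiff_subset))
      · intro a ha b hb
        rw [mem_insert] at ha hb
        have hnadj : ∀ c ∈ J, ¬ G.Adj i c := by
          intro c hc
          have := hsub hc; rw [mem_sdiff, Gp, mem_insert, SimpleGraph.mem_neighborFinset] at this
          tauto
        rcases ha with rfl | ha <;> rcases hb with rfl | hb
        · exact fun h => G.irrefl h
        · exact hnadj b hb
        · exact fun h => hnadj a ha h.symm
        · exact hind a ha b hb

lemma sum_indep_insert (f : Fin n → ℝ) {i : Fin n} {S : Finset (Fin n)} (hi : i ∉ S) :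
    ∑ I ∈ (insert i S).powerset.filter (fun I => Indep G I), ∏ j ∈ I, f j
      = (∑ I ∈ S.powerset.filter (fun I => Indep G I), ∏ j ∈ I, f j)
        + f i * ∑ I ∈ (S \ Gp G i).powerset.filter (fun I => Indep G I), ∏ j ∈ I, f j := by
  rw [filter_indep_insert G hi, sum_union, sum_image, mul_sum]
  · congr 1
    apply sum_congr rfl
    intro I hI
    rw [mem_filter, mem_powerset] at hI
    have hiI : i ∉ I := fun h => by
      have := hI.1 h; rw [mem_sdiff] at this
      exact this.2 (by rw [Gp]; exact mem_insert_self _ _)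
    rw [prod_insert hiI]
  · intro a ha b hb hab
    rw [mem_coe, mem_filter, mem_powerset] at ha hb
    have hia : i ∉ a := fun h => (mem_sdiff.mp (ha.1 h)).2 (mem_insert_self _ _)
    have hib : i ∉ b := fun h => (mem_sdiff.mp (hb.1 h)).2 (mem_insert_self _ _)
    rw [← erase_insert hia, ← erase_insert hib, hab]
  · rw [disjoint_left]
    intro I hI hI'
    rw [mem_filter, mem_powerset] at hI
    rw [mem_image] at hI'
    obtain ⟨J, _, rfl⟩ := hI'
    exact hi (hI.1 (mem_insert_self _ _))

lemma Yf_insert (y : Fin n → ℝ) {i : Fin n} {S : Finset (Fin n)} (hi : i ∉ S) :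
    Yf G y (insert i S) = Yf G y S + y i * Yf G y (S \ Gp G i) :=
  sum_indep_insert G y hi

lemma qb_eq_sum (p : Fin n → ℝ) (S : Finset (Fin n)) :
    qb G p S = ∑ I ∈ S.powerset.filter (fun I => Indep G I), ∏ i ∈ I, (-p i) := by
  apply sum_congr rfl
  intro I _
  rw [show (fun i => -p i) = (fun i => (-1) * p i) by funext; ring, prod_mul_distrib,
    prod_const]

lemma qb_insert (p : Fin n → ℝ) {i : Fin n} {S : Finset (Fin n)} (hi : i ∉ S) :
    qb G p (insert i S) = qb G p S - p i * qb G p (S \ Gp G i) := by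
  rw [qb_eq_sum, qb_eq_sum, qb_eq_sum, sum_indep_insert G _ hi]; ring

lemma qb_empty (p : Fin n → ℝ) : qb G p ∅ = 1 := by
  rw [qb]
  rw [show (∅ : Finset (Fin n)).powerset.filter (fun I => Indep G I) = {∅} by
    ext I; simp only [mem_filter, mem_powerset, subset_empty, mem_singleton]
    constructor
    · tauto
    · rintro rfl; exact ⟨rfl, fun i hi => by simp at hi⟩]
  simp

lemma Yf_empty (y : Fin n → ℝ) : Yf G y ∅ = 1 := by
  rw [Yf]
  rw [show (∅ : Finset (Fin n)).powerset.filter (fun I => Indep G I) = {∅} by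
    ext I; simp only [mem_filter, mem_powerset, subset_empty, mem_singleton]
    constructor
    · tauto
    · rintro rfl; exact ⟨rfl, fun i hi => by simp at hi⟩]
  simp

variable {y : Fin n → ℝ} (hy : ∀ i, 0 < y i)

include hy in
lemma Yf_one_le (S : Finset (Fin n)) : 1 ≤ Yf G y S := by
  have hemp : ∅ ∈ S.powerset.filter (fun I => Indep G I) := by
    rw [mem_filter, mem_powerset]
    exact ⟨empty_subset _, fun i hi => by simp at hi⟩
  have := single_le_sum (f := fun I => ∏ i ∈ I, y i)
    (fun I _ => prod_nonneg fun i _ => (hy i).le) hemp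
  simpa [Yf] using this

include hy in
lemma Yf_pos (S : Finset (Fin n)) : 0 < Yf G y S := lt_of_lt_of_le one_pos (Yf_one_le G hy S)

include hy in
lemma Yf_mono {S T : Finset (Fin n)} (h : S ⊆ T) : Yf G y S ≤ Yf G y T := by
  apply sum_le_sum_of_subset_of_nonneg
  · intro I hI
    rw [mem_filter, mem_powerset] at hI ⊢
    exact ⟨hI.1.trans h, hI.2⟩
  · exact fun I _ _ => prod_nonneg fun i _ => (hy i).le

include hy in
lemma Yf_submul (A B : Finset (Fin n)) : Yf G y (A ∪ B) ≤ Yf G y A * Yf G y B := by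
  rw [Yf, Yf, Yf, sum_mul_sum]
  have key : ∀ K ∈ (A ∪ B).powerset.filter (fun I => Indep G I),
      (∏ i ∈ K, y i) = (∏ i ∈ K ∩ A, y i) * (∏ i ∈ K \ A, y i) := by
    intro K _
    rw [← prod_union (disjoint_sdiff_inter _ _).symm]
    congr 1
    rw [union_comm, sdiff_union_inter]
  rw [sum_congr rfl key]
  have himg : ∀ K ∈ (A ∪ B).powerset.filter (fun I => Indep G I),
      (K ∩ A, K \ A) ∈ (A.powerset.filter (fun I => Indep G I)) ×ˢ
        (B.powerset.filter (fun I => Indep G I)) := by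
    intro K hK
    rw [mem_filter, mem_powerset] at hK
    rw [mem_product, mem_filter, mem_filter, mem_powerset, mem_powerset]
    refine ⟨⟨inter_subset_right, indep_subset G inter_subset_left hK.2⟩,
      ⟨?_, indep_subset G (sdiff_subset) hK.2⟩⟩
    intro a ha
    rw [mem_sdiff] at ha
    have := hK.1 ha.1; rw [mem_union] at this; tauto
  calc ∑ K ∈ (A ∪ B).powerset.filter (fun I => Indep G I),
        (∏ i ∈ K ∩ A, y i) * (∏ i ∈ K \ A, y i)
      ≤ ∑ q ∈ (A.powerset.filter (fun I => Indep G I)) ×ˢ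
          (B.powerset.filter (fun I => Indep G I)), (∏ i ∈ q.1, y i) * (∏ i ∈ q.2, y i) := by
        have hinj : ∀ a ∈ (A ∪ B).powerset.filter (fun I => Indep G I),
            ∀ b ∈ (A ∪ B).powerset.filter (fun I => Indep G I),
            (fun K => (K ∩ A, K \ A)) a = (fun K => (K ∩ A, K \ A)) b → a = b := by
          intro a _ b _ hab
          simp only [Prod.mk.injEq] at hab
          rw [← sdiff_union_inter a A, ← sdiff_union_inter b A, hab.1, hab.2]
        have heq := sum_image (s := (A ∪ B).powerset.filter (fun I => Indep G I))
          (g := fun K => (K ∩ A, K \ A))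
          (f := fun q : Finset (Fin n) × Finset (Fin n) =>
          (∏ i ∈ q.1, y i) * (∏ i ∈ q.2, y i)) hinj
        have hsub : ((A ∪ B).powerset.filter (fun I => Indep G I)).image
            (fun K => (K ∩ A, K \ A)) ⊆ (A.powerset.filter (fun I => Indep G I)) ×ˢ
            (B.powerset.filter (fun I => Indep G I)) := by
          rw [image_subset_iff]; exact himg
        have hnn : ∀ q ∈ (A.powerset.filter (fun I => Indep G I)) ×ˢ
            (B.powerset.filter (fun I => Indep G I)),
            q ∉ ((A ∪ B).powerset.filter (fun I => Indep G I)).image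
              (fun K => (K ∩ A, K \ A)) →
            0 ≤ (∏ i ∈ q.1, y i) * (∏ i ∈ q.2, y i) := fun q _ _ =>
          mul_nonneg (prod_nonneg fun i _ => (hy i).le) (prod_nonneg fun i _ => (hy i).le)
        exact le_trans (le_of_eq heq.symm) (sum_le_sum_of_subset_of_nonneg hsub hnn)
  _ = _ := by rw [sum_product]

include hy in
lemma qb_chain (p : Fin n → ℝ) (hcl : ∀ i, p i ≤ y i / Yf G y (Gp G i)) :
    ∀ S : Finset (Fin n), ∀ U ⊆ S, qb G p U * Yf G y Sᶜ ≤ qb G p S * Yf G y Uᶜ := by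
  intro S
  induction S using Finset.strongInductionOn with
  | _ S ih =>
    intro U hU
    rcases eq_or_ne U S with rfl | hne
    · exact le_refl _
    obtain ⟨i, hiS, hiU⟩ := exists_of_ssubset (Finset.ssubset_iff_subset_ne.mpr ⟨hU, hne⟩)
    set S' := S.erase i with hS'def
    have hiS' : i ∉ S' := notMem_erase _ _
    have hSS' : S = insert i S' := (insert_erase hiS).symm
    have hss : S' ⊂ S := erase_ssubset hiS
    have hUS' : U ⊆ S' := subset_erase.mpr ⟨hU, hiU⟩
    have ihS' := ih S' hss
    have hqpos : ∀ T ⊆ S', 0 < qb G p T := by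
      intro T hT
      have h1 := ih T (Finset.ssubset_of_subset_of_ssubset hT hss) ∅ (empty_subset _)
      rw [qb_empty, one_mul, compl_empty] at h1
      nlinarith [Yf_one_le G hy Tᶜ, Yf_pos G hy (univ : Finset (Fin n))]
    have hqS' : 0 < qb G p S' := hqpos S' (Subset.refl _)
    have step : qb G p S' * Yf G y Sᶜ ≤ qb G p S * Yf G y S'ᶜ := by
      set T := S' \ Gp G i with hT
      have hTsub : T ⊆ S' := sdiff_subset
      have hqT : 0 < qb G p T := hqpos T hTsub
      have hqS : qb G p S = qb G p S' - p i * qb G p T := by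
        rw [hSS', qb_insert G p hiS']
      have hiGp : i ∈ Gp G i := mem_insert_self _ _
      have hic : i ∉ Sᶜ := by rw [mem_compl]; exact fun h => h hiS
      have hc1 : insert i Sᶜ = S'ᶜ := by
        ext j
        simp only [mem_insert, mem_compl, hS'def, mem_erase, not_and_or, not_not]
        try tauto
      have hc2 : Sᶜ \ Gp G i = S'ᶜ \ Gp G i := by
        ext j
        simp only [mem_sdiff, mem_compl, hS'def, mem_erase, not_and_or, not_not]
        have : j = i → j ∈ Gp G i := fun h => h ▸ hiGp
        tauto
      have hYS' : Yf G y S'ᶜ = Yf G y Sᶜ + y i * Yf G y (S'ᶜ \ Gp G i) := by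
        rw [← hc1, Yf_insert G y hic, hc2, hc1]
      have hTc : Tᶜ = Gp G i ∪ (S'ᶜ \ Gp G i) := by
        ext j
        simp only [hT, mem_union, mem_sdiff, mem_compl, not_and_or, not_not]
        tauto
      have hsubm : Yf G y Tᶜ ≤ Yf G y (Gp G i) * Yf G y (S'ᶜ \ Gp G i) := by
        rw [hTc]; exact Yf_submul G hy _ _
      have hchT : qb G p T * Yf G y S'ᶜ ≤ qb G p S' * Yf G y Tᶜ := ihS' T hTsub
      have hpY : p i * Yf G y (Gp G i) ≤ y i :=
        (le_div_iff₀ (Yf_pos G hy _)).mp (hcl i)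
      have key : qb G p S * Yf G y S'ᶜ - qb G p S' * Yf G y Sᶜ
          = y i * (qb G p S' * Yf G y (S'ᶜ \ Gp G i))
            - p i * (qb G p T * Yf G y S'ᶜ) := by
        rw [hqS, hYS']; ring
      have hZ : 0 < Yf G y (S'ᶜ \ Gp G i) := Yf_pos G hy _
      have hS'c : 0 < Yf G y S'ᶜ := Yf_pos G hy _
      rcases le_or_gt (p i) 0 with hp | hp
      · nlinarith [mul_pos hqT hS'c, mul_pos hqS' hZ, hy i]
      · have c1 : p i * (qb G p T * Yf G y S'ᶜ) ≤ p i * (qb G p S' * Yf G y Tᶜ) :=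
          mul_le_mul_of_nonneg_left hchT hp.le
        have c2 : p i * (qb G p S' * Yf G y Tᶜ)
            ≤ p i * (qb G p S' * (Yf G y (Gp G i) * Yf G y (S'ᶜ \ Gp G i))) :=
          mul_le_mul_of_nonneg_left (mul_le_mul_of_nonneg_left hsubm hqS'.le) hp.le
        have c3 : p i * (qb G p S' * (Yf G y (Gp G i) * Yf G y (S'ᶜ \ Gp G i)))
            = (p i * Yf G y (Gp G i)) * (qb G p S' * Yf G y (S'ᶜ \ Gp G i)) := by ring
        have c4 : (p i * Yf G y (Gp G i)) * (qb G p S' * Yf G y (S'ᶜ \ Gp G i))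
            ≤ y i * (qb G p S' * Yf G y (S'ᶜ \ Gp G i)) :=
          mul_le_mul_of_nonneg_right hpY (mul_pos hqS' hZ).le
        linarith
    have h1 : qb G p U * Yf G y S'ᶜ ≤ qb G p S' * Yf G y Uᶜ := ihS' U hUS'
    have hS'c : 0 < Yf G y S'ᶜ := Yf_pos G hy _
    refine le_of_mul_le_mul_right ?_ hS'c
    calc qb G p U * Yf G y Sᶜ * Yf G y S'ᶜ
        = (qb G p U * Yf G y S'ᶜ) * Yf G y Sᶜ := by ring
      _ ≤ (qb G p S' * Yf G y Uᶜ) * Yf G y Sᶜ :=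
          mul_le_mul_of_nonneg_right h1 (Yf_pos G hy _).le
      _ = (qb G p S' * Yf G y Sᶜ) * Yf G y Uᶜ := by ring
      _ ≤ (qb G p S * Yf G y S'ᶜ) * Yf G y Uᶜ :=
          mul_le_mul_of_nonneg_right step (Yf_pos G hy _).le
      _ = qb G p S * Yf G y Uᶜ * Yf G y S'ᶜ := by ring

include hy in
lemma qb_pos (p : Fin n → ℝ) (hcl : ∀ i, p i ≤ y i / Yf G y (Gp G i)) (S : Finset (Fin n)) :
    0 < qb G p S := by
  have h1 := qb_chain G hy p hcl S ∅ (empty_subset _)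
  rw [qb_empty, one_mul, compl_empty] at h1
  nlinarith [Yf_one_le G hy Sᶜ, Yf_pos G hy (univ : Finset (Fin n))]

section Meas
variable {Ω : Type*} [MeasurableSpace Ω] (μ : Measure Ω) [IsProbabilityMeasure μ]
  (E : Fin n → Set Ω)

lemma R_empty : (μ (⋂ j ∈ (∅ : Finset (Fin n)), (E j)ᶜ)).toReal = 1 := by
  simp

lemma R_mono {S T : Finset (Fin n)} (h : S ⊆ T) :
    (μ (⋂ j ∈ T, (E j)ᶜ)).toReal ≤ (μ (⋂ j ∈ S, (E j)ᶜ)).toReal := by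
  apply ENNReal.toReal_mono (measure_ne_top μ _)
  apply measure_mono
  intro x hx
  simp only [Set.mem_iInter] at hx ⊢
  exact fun j hj => hx j (h hj)

lemma R_split (hE : ∀ i, MeasurableSet (E i)) {i : Fin n} {S : Finset (Fin n)} :
    (μ (⋂ j ∈ insert i S, (E j)ᶜ)).toReal
      = (μ (⋂ j ∈ S, (E j)ᶜ)).toReal - (μ (E i ∩ ⋂ j ∈ S, (E j)ᶜ)).toReal := by
  have hbi : (⋂ j ∈ insert i S, (E j)ᶜ) = (⋂ j ∈ S, (E j)ᶜ) \ E i := by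
    rw [Set.diff_eq, Set.inter_comm, Finset.set_biInter_insert]
  have hsplit := measure_inter_add_diff (μ := μ) (⋂ j ∈ S, (E j)ᶜ) (hE i)
  have := congrArg ENNReal.toReal hsplit
  rw [ENNReal.toReal_add (measure_ne_top μ _) (measure_ne_top μ _)] at this
  rw [hbi, Set.inter_comm (E i)]
  linarith

lemma R_chain (hE : ∀ i, MeasurableSet (E i)) (p : Fin n → ℝ)
    (hdep : ∀ i, ∀ J : Finset (Fin n), J ⊆ Finset.univ \ Gp G i →
      0 < (μ (⋂ j ∈ J, (E j)ᶜ)).toReal →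
      (μ (E i ∩ ⋂ j ∈ J, (E j)ᶜ)).toReal / (μ (⋂ j ∈ J, (E j)ᶜ)).toReal ≤ p i)
    (hpnn : ∀ i, 0 ≤ p i) (hqpos : ∀ S, 0 < qb G p S) :
    ∀ S : Finset (Fin n), ∀ U ⊆ S,
      (μ (⋂ j ∈ U, (E j)ᶜ)).toReal * qb G p S
        ≤ (μ (⋂ j ∈ S, (E j)ᶜ)).toReal * qb G p U := by
  intro S
  induction S using Finset.strongInductionOn with
  | _ S ih =>
    intro U hU
    rcases eq_or_ne U S with rfl | hne
    · exact le_refl _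
    obtain ⟨i, hiS, hiU⟩ := exists_of_ssubset (Finset.ssubset_iff_subset_ne.mpr ⟨hU, hne⟩)
    set S' := S.erase i with hS'def
    have hiS' : i ∉ S' := notMem_erase _ _
    have hSS' : S = insert i S' := (insert_erase hiS).symm
    have hss : S' ⊂ S := erase_ssubset hiS
    have hUS' : U ⊆ S' := subset_erase.mpr ⟨hU, hiU⟩
    have ihS' := ih S' hss
    have step : (μ (⋂ j ∈ S', (E j)ᶜ)).toReal * qb G p S
        ≤ (μ (⋂ j ∈ S, (E j)ᶜ)).toReal * qb G p S' := by
      set T := S' \ Gp G i with hT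
      have hTsub : T ⊆ S' := sdiff_subset
      have hTuniv : T ⊆ Finset.univ \ Gp G i := fun j hj =>
        mem_sdiff.mpr ⟨mem_univ _, (mem_sdiff.mp hj).2⟩
      have hqS : qb G p S = qb G p S' - p i * qb G p T := by
        rw [hSS', qb_insert G p hiS']
      have hRS : (μ (⋂ j ∈ S, (E j)ᶜ)).toReal
          = (μ (⋂ j ∈ S', (E j)ᶜ)).toReal - (μ (E i ∩ ⋂ j ∈ S', (E j)ᶜ)).toReal := by
        rw [hSS']; exact R_split μ E hE
      have hm : (μ (E i ∩ ⋂ j ∈ S', (E j)ᶜ)).toReal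
          ≤ (μ (E i ∩ ⋂ j ∈ T, (E j)ᶜ)).toReal := by
        apply ENNReal.toReal_mono (measure_ne_top μ _)
        apply measure_mono
        apply Set.inter_subset_inter_right
        intro x hx
        simp only [Set.mem_iInter] at hx ⊢
        exact fun j hj => hx j (hTsub hj)
      rcases lt_or_ge 0 ((μ (⋂ j ∈ T, (E j)ᶜ)).toReal) with hRT | hRT
      · have hm' : (μ (E i ∩ ⋂ j ∈ T, (E j)ᶜ)).toReal
            ≤ p i * (μ (⋂ j ∈ T, (E j)ᶜ)).toReal := by
          have := hdep i T hTuniv hRT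
          rw [div_le_iff₀ hRT] at this
          linarith
        have hchT : (μ (⋂ j ∈ T, (E j)ᶜ)).toReal * qb G p S'
            ≤ (μ (⋂ j ∈ S', (E j)ᶜ)).toReal * qb G p T := ihS' T hTsub
        have c1 : (μ (E i ∩ ⋂ j ∈ S', (E j)ᶜ)).toReal * qb G p S'
            ≤ (p i * (μ (⋂ j ∈ T, (E j)ᶜ)).toReal) * qb G p S' :=
          mul_le_mul_of_nonneg_right (le_trans hm hm') (hqpos S').le
        have c2 : p i * ((μ (⋂ j ∈ T, (E j)ᶜ)).toReal * qb G p S')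
            ≤ p i * ((μ (⋂ j ∈ S', (E j)ᶜ)).toReal * qb G p T) :=
          mul_le_mul_of_nonneg_left hchT (hpnn i)
        rw [hqS, hRS]
        nlinarith [c1, c2]
      · have hRT0 : (μ (⋂ j ∈ T, (E j)ᶜ)).toReal = 0 :=
          le_antisymm hRT ENNReal.toReal_nonneg
        have hRS'0 : (μ (⋂ j ∈ S', (E j)ᶜ)).toReal = 0 :=
          le_antisymm (hRT0 ▸ R_mono μ E hTsub) ENNReal.toReal_nonneg
        have hRS0 : (μ (⋂ j ∈ S, (E j)ᶜ)).toReal = 0 := by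
          have := R_mono μ E (show S' ⊆ S from hss.subset)
          have h0 := ENNReal.toReal_nonneg (a := μ (⋂ j ∈ S, (E j)ᶜ))
          linarith [hRS'0 ▸ this]
        rw [hRS'0, hRS0, zero_mul, zero_mul]
    have h1 : (μ (⋂ j ∈ U, (E j)ᶜ)).toReal * qb G p S'
        ≤ (μ (⋂ j ∈ S', (E j)ᶜ)).toReal * qb G p U := ihS' U hUS'
    refine le_of_mul_le_mul_right ?_ (hqpos S')
    calc (μ (⋂ j ∈ U, (E j)ᶜ)).toReal * qb G p S * qb G p S'
        = ((μ (⋂ j ∈ U, (E j)ᶜ)).toReal * qb G p S') * qb G p S := by ring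
      _ ≤ ((μ (⋂ j ∈ S', (E j)ᶜ)).toReal * qb G p U) * qb G p S :=
          mul_le_mul_of_nonneg_right h1 (hqpos S).le
      _ = ((μ (⋂ j ∈ S', (E j)ᶜ)).toReal * qb G p S) * qb G p U := by ring
      _ ≤ ((μ (⋂ j ∈ S, (E j)ᶜ)).toReal * qb G p S') * qb G p U :=
          mul_le_mul_of_nonneg_right step (hqpos U).le
      _ = (μ (⋂ j ∈ S, (E j)ᶜ)).toReal * qb G p U * qb G p S' := by ring

end Meas

theorem cluster_expansion_lemma {Ω : Type*} [MeasurableSpace Ω] (μ : Measure Ω) [IsProbabilityMeasure μ]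
    {n : ℕ} (G : SimpleGraph (Fin n)) [DecidableRel G.Adj]
    (E : Fin n → Set Ω) (hE : ∀ i, MeasurableSet (E i)) (p : Fin n → ℝ)
    (hdep : ∀ i, ∀ J : Finset (Fin n), J ⊆ Finset.univ \ Gp G i →
      0 < (μ (⋂ j ∈ J, (E j)ᶜ)).toReal →
      (μ (E i ∩ ⋂ j ∈ J, (E j)ᶜ)).toReal / (μ (⋂ j ∈ J, (E j)ᶜ)).toReal ≤ p i)
    (y : Fin n → ℝ) (hy : ∀ i, 0 < y i)
    (hcl : ∀ i, p i ≤ y i / Yf G y (Gp G i)) :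
    (μ (⋂ i, (E i)ᶜ)).toReal ≥ 1 / Yf G y Finset.univ ∧
      0 < 1 / Yf G y Finset.univ := by
  have hYpos : 0 < Yf G y Finset.univ := Yf_pos G hy _
  have hpnn : ∀ i, 0 ≤ p i := by
    intro i
    have h0 : (μ (⋂ j ∈ (∅ : Finset (Fin n)), (E j)ᶜ)).toReal = 1 := R_empty μ E
    have := hdep i ∅ (empty_subset _) (by rw [h0]; norm_num)
    rw [h0, div_one] at this
    exact le_trans ENNReal.toReal_nonneg this
  have hqpos : ∀ S, 0 < qb G p S := qb_pos G hy p hcl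
  have h1 := qb_chain G hy p hcl Finset.univ ∅ (empty_subset _)
  rw [qb_empty, one_mul, compl_empty, compl_univ, Yf_empty] at h1
  have h2 := R_chain G μ E hE p hdep hpnn hqpos Finset.univ ∅ (empty_subset _)
  rw [R_empty, one_mul, qb_empty, mul_one] at h2
  have hiI : (⋂ i, (E i)ᶜ) = ⋂ j ∈ (Finset.univ : Finset (Fin n)), (E j)ᶜ := by
    simp
  constructor
  · rw [ge_iff_le, hiI, div_le_iff₀ hYpos]
    calc (1:ℝ) ≤ qb G p Finset.univ * Yf G y Finset.univ := h1
      _ ≤ (μ (⋂ j ∈ (Finset.univ : Finset (Fin n)), (E j)ᶜ)).toReal * Yf G y Finset.univ :=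
          mul_le_mul_of_nonneg_right h2 hYpos.le
  · exact one_div_pos.mpr hYpos
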